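/- Let 𝔘 be a Banach algebra such that 𝔘♯ is symmetrically pseudo-amenable, and X a Banach 𝔘-bimodule. Then every bounded central Jordan derivation from 𝔘 to X (i.e., with range in Z_𝔘(X)) is a derivation. -/

import Mathlib

open Filter Topology

universe u

/-- A realization of the projective Banach-space tensor square `A ⊗̂ A` of a (non-unital)
Banach algebra `A`, together with the canonical bimodule operations `a•t`, `t•a`, the
"opposite" operations `a∘t`, `t∘a`, the product maps `π`, `π°` and the flip map, each
characterized by its values on elementary tensors.  The norm is the projective tensor norm:
`‖a ⊗ b‖ ≤ ‖a‖‖b‖` and every element is an absolutely convergent sum of elementary tensors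
whose total norm is arbitrarily close to its norm; moreover bounded bilinear maps lift. -/
structure ProjTensorSquare (A : Type u) [NonUnitalNormedRing A] [NormedSpace ℂ A]
    [IsScalarTower ℂ A A] [SMulCommClass ℂ A A] [CompleteSpace A] where
  /-- the underlying Banach space of `A ⊗̂ A` -/
  T : Type u
  [nacg : NormedAddCommGroup T]
  [nsp : NormedSpace ℂ T]
  [cplt : CompleteSpace T]
  /-- the canonical bilinear map `(a, b) ↦ a ⊗ b` -/
  tmul : A →L[ℂ] A →L[ℂ] T
  norm_tmul_le : ∀ a b : A, ‖tmul a b‖ ≤ ‖a‖ * ‖b‖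
  /-- the projective norm property -/
  exists_rep : ∀ (t : T) (ε : ℝ), 0 < ε → ∃ u v : ℕ → A,
      Summable (fun n => ‖u n‖ * ‖v n‖) ∧ HasSum (fun n => tmul (u n) (v n)) t ∧
      ∑' n, ‖u n‖ * ‖v n‖ ≤ ‖t‖ + ε
  /-- the universal property: bounded bilinear maps into a Banach space lift to `T` -/
  lift : ∀ {X : Type u} [NormedAddCommGroup X] [NormedSpace ℂ X] [CompleteSpace X]
      (f : A →L[ℂ] A →L[ℂ] X), ∃ g : T →L[ℂ] X, (∀ a b, g (tmul a b) = f a b) ∧ ‖g‖ ≤ ‖f‖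
  /-- the left module action: `a • (b ⊗ c) = (a * b) ⊗ c` -/
  lmul : A → T →L[ℂ] T
  lmul_tmul : ∀ a b c, lmul a (tmul b c) = tmul (a * b) c
  /-- the right module action: `(b ⊗ c) • a = b ⊗ (c * a)` -/
  rmul : A → T →L[ℂ] T
  rmul_tmul : ∀ a b c, rmul a (tmul b c) = tmul b (c * a)
  /-- the left opposite action: `a ∘ (b ⊗ c) = b ⊗ (a * c)` -/
  lcirc : A → T →L[ℂ] T
  lcirc_tmul : ∀ a b c, lcirc a (tmul b c) = tmul b (a * c)
  /-- the right opposite action: `(b ⊗ c) ∘ a = (b * a) ⊗ c` -/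
  rcirc : A → T →L[ℂ] T
  rcirc_tmul : ∀ a b c, rcirc a (tmul b c) = tmul (b * a) c
  /-- the product map `π : b ⊗ c ↦ b * c` -/
  π : T →L[ℂ] A
  π_tmul : ∀ b c, π (tmul b c) = b * c
  /-- the opposite product map `π° : b ⊗ c ↦ c * b` -/
  πop : T →L[ℂ] A
  πop_tmul : ∀ b c, πop (tmul b c) = c * b
  /-- the flip map `(b ⊗ c)° = c ⊗ b` -/
  flip : T →L[ℂ] T
  flip_tmul : ∀ b c, flip (tmul b c) = tmul c b

attribute [instance] ProjTensorSquare.nacg ProjTensorSquare.nsp ProjTensorSquare.cplt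

namespace ProjTensorSquare

variable {A : Type u} [NonUnitalNormedRing A] [NormedSpace ℂ A]
    [IsScalarTower ℂ A A] [SMulCommClass ℂ A A] [CompleteSpace A]

/-- `t` is an approximate diagonal for `A` consisting of symmetric tensors, along the
filter `l`:  each `t i` is symmetric, `a • tᵢ - tᵢ • a → 0` and `π(tᵢ) a → a` for all `a`. -/
def IsSymmApproxDiagonal (P : ProjTensorSquare A) {ι : Type u} (l : Filter ι)
    (t : ι → P.T) : Prop :=
  (∀ i, P.flip (t i) = t i) ∧
  (∀ a : A, Tendsto (fun i => P.lmul a (t i) - P.rmul a (t i)) l (𝓝 0)) ∧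
  (∀ a : A, Tendsto (fun i => P.π (t i) * a) l (𝓝 a))

/-- A Banach algebra is symmetrically pseudo-amenable if it has a (not necessarily bounded)
approximate diagonal consisting of symmetric tensors. -/
def SymmPseudoAmenable (P : ProjTensorSquare A) : Prop :=
  ∃ (ι : Type u) (l : Filter ι) (t : ι → P.T), l.NeBot ∧ P.IsSymmApproxDiagonal l t

end ProjTensorSquare

/-- A Banach `A`-bimodule: a Banach space with commuting bounded left and right `A`-actions. -/
structure BanachBimodule (A X : Type u) [NonUnitalNormedRing A] [NormedSpace ℂ A]
    [NormedAddCommGroup X] [NormedSpace ℂ X] where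
  /-- the left action `(a, x) ↦ a • x` -/
  lsmul : A →L[ℂ] X →L[ℂ] X
  /-- the right action `(a, x) ↦ x • a` -/
  rsmul : A →L[ℂ] X →L[ℂ] X
  lsmul_mul : ∀ a b x, lsmul (a * b) x = lsmul a (lsmul b x)
  rsmul_mul : ∀ a b x, rsmul (a * b) x = rsmul b (rsmul a x)
  lsmul_rsmul : ∀ a b x, lsmul a (rsmul b x) = rsmul b (lsmul a x)

namespace BanachBimodule

variable {A X : Type u} [NonUnitalNormedRing A] [NormedSpace ℂ A]
  [NormedAddCommGroup X] [NormedSpace ℂ X]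

/-- `D(ab) = D(a)·b + a·D(b)` -/
def IsDerivation (M : BanachBimodule A X) (D : A → X) : Prop :=
  ∀ a b, D (a * b) = M.rsmul b (D a) + M.lsmul a (D b)

/-- `D(ab + ba) = D(a)·b + a·D(b) + D(b)·a + b·D(a)` -/
def IsJordanDerivation (M : BanachBimodule A X) (D : A → X) : Prop :=
  ∀ a b, D (a * b + b * a) =
    M.rsmul b (D a) + M.lsmul a (D b) + M.rsmul a (D b) + M.lsmul b (D a)

/-- `D(ab − ba) = D(a)·b + a·D(b) − D(b)·a − b·D(a)` -/
def IsLieDerivation (M : BanachBimodule A X) (D : A → X) : Prop :=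
  ∀ a b, D (a * b - b * a) =
    M.rsmul b (D a) + M.lsmul a (D b) - M.rsmul a (D b) - M.lsmul b (D a)

/-- the center `Z_𝔘(X) = {x ∈ X | a·x = x·a for all a ∈ 𝔘}` -/
def center (M : BanachBimodule A X) : Set X := {x | ∀ a, M.lsmul a x = M.rsmul a x}

/-- the left action extended to the `ℓ¹`-unitization `𝔘♯`, via `1 • x = x` -/
noncomputable def uLsmul (M : BanachBimodule A X) (a : WithLp 1 (Unitization ℂ A)) (x : X) : X :=
  (WithLp.equiv 1 (Unitization ℂ A) a).fst • x + M.lsmul ((WithLp.equiv 1 (Unitization ℂ A)) a).snd x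

/-- the right action extended to the `ℓ¹`-unitization `𝔘♯`, via `x • 1 = x` -/
noncomputable def uRsmul (M : BanachBimodule A X) (a : WithLp 1 (Unitization ℂ A)) (x : X) : X :=
  (WithLp.equiv 1 (Unitization ℂ A) a).fst • x + M.rsmul ((WithLp.equiv 1 (Unitization ℂ A)) a).snd x

end BanachBimodule

section Core

variable {B X : Type u}
  [NonUnitalNormedRing B] [NormedSpace ℂ B] [IsScalarTower ℂ B B] [SMulCommClass ℂ B B]
  [CompleteSpace B]
  [NormedAddCommGroup X] [NormedSpace ℂ X] [CompleteSpace X]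


variable (P : ProjTensorSquare B)

noncomputable def liftT (f : B →L[ℂ] B →L[ℂ] X) : P.T →L[ℂ] X := (P.lift f).choose

@[simp] lemma liftT_tmul (f : B →L[ℂ] B →L[ℂ] X) (u v : B) :
    liftT P f (P.tmul u v) = f u v := (P.lift f).choose_spec.1 u v

lemma ext_tmul {Y : Type u} [NormedAddCommGroup Y] [NormedSpace ℂ Y]
    (f g : P.T →L[ℂ] Y) (h : ∀ u v, f (P.tmul u v) = g (P.tmul u v)) : f = g := by
  ext τ
  obtain ⟨u, v, -, hh, -⟩ := P.exists_rep τ 1 one_pos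
  rw [← (f.hasSum hh).tsum_eq, ← (g.hasSum hh).tsum_eq]
  exact tsum_congr fun n => h (u n) (v n)

variable (Lex : B →L[ℂ] X →L[ℂ] X) (Dt : B →L[ℂ] X)

/-- `Φ p q = ½ (Dt (pq) - Dt (qp))` as a continuous bilinear map. -/
noncomputable def phiB : B →L[ℂ] B →L[ℂ] X :=
  (2⁻¹ : ℂ) • (((ContinuousLinearMap.compL ℂ B B X Dt).comp (ContinuousLinearMap.mul ℂ B)) -
    ((ContinuousLinearMap.compL ℂ B B X Dt).comp (ContinuousLinearMap.mul ℂ B)).flip)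

@[simp] lemma phiB_apply (p q : B) :
    phiB Dt p q = (2⁻¹ : ℂ) • (Dt (p * q) - Dt (q * p)) := rfl

/-- `(u,v) ↦ Lex v (Dt u)`. -/
noncomputable def bilNv : B →L[ℂ] B →L[ℂ] X := Lex.flip.comp Dt

@[simp] lemma bilNv_apply (u v : B) : bilNv Lex Dt u v = Lex v (Dt u) := rfl

/-- `(u,v) ↦ Lex v (Φ c u)`. -/
noncomputable def bilK2 (c : B) : B →L[ℂ] B →L[ℂ] X := Lex.flip.comp (phiB Dt c)

@[simp] lemma bilK2_apply (c u v : B) : bilK2 Lex Dt c u v = Lex v (phiB Dt c u) := rfl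

/-- `(u,v) ↦ Φ (v*c) u`. -/
noncomputable def bilG (c : B) : B →L[ℂ] B →L[ℂ] X :=
  ((phiB Dt).comp ((ContinuousLinearMap.mul ℂ B).flip c)).flip

@[simp] lemma bilG_apply (c u v : B) : bilG Dt c u v = phiB Dt (v * c) u := rfl

set_option maxHeartbeats 2000000 in
theorem core_comm
    (e : B) (he_mul : ∀ x : B, e * x = x) (hmul_e : ∀ x : B, x * e = x)
    (hLone : ∀ x : X, Lex e x = x)
    (hLmul : ∀ (p q : B) (x : X), Lex (p * q) x = Lex p (Lex q x))
    (hR : ∀ p q : B, Dt (p * q) + Dt (q * p) = (2 : ℂ) • (Lex p (Dt q) + Lex q (Dt p)))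
    {ι : Type u} {l : Filter ι} (hne : l.NeBot) {t : ι → P.T}
    (hfl : ∀ i, P.flip (t i) = t i)
    (hmove : ∀ c : B, Tendsto (fun i => P.lmul c (t i) - P.rmul c (t i)) l (𝓝 0))
    (hq : ∀ c : B, Tendsto (fun i => P.π (t i) * c) l (𝓝 c)) :
    ∀ p q : B, Dt (p * q) = Dt (q * p) := by
  haveI := hne
  set Φ := phiB Dt with hΦdef
  have hLmul' : ∀ (p q : B) (x : X), Lex p (Lex q x) = Lex (p * q) x :=
    fun p q x => (hLmul p q x).symm
  -- the fundamental product rule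
  have hR' : ∀ p q : B, Dt (p * q) = Lex p (Dt q) + Lex q (Dt p) + Φ p q := by
    intro p q
    have h2 : (2⁻¹ : ℂ) • (Dt (p * q) + Dt (q * p)) = Lex p (Dt q) + Lex q (Dt p) := by
      rw [hR, smul_smul]; norm_num
    rw [phiB_apply, ← h2]
    module
  have hanti : ∀ p q : B, Φ p q = -Φ q p := by
    intro p q
    rw [hΦdef, phiB_apply, phiB_apply, ← smul_neg, neg_sub]
  have hphi_e : ∀ c : B, Φ c e = 0 := by
    intro c; rw [hΦdef, phiB_apply, hmul_e, he_mul, sub_self, smul_zero]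
  have hDte : Dt e = 0 := by
    have h := hR e e
    rw [he_mul, hLone] at h
    have h2 : Dt e + Dt e = 0 := by
      have h3 : ((2 : ℂ) - 1) • (Dt e + Dt e) = 0 := by
        rw [sub_smul, one_smul, ← h, sub_self]
      have hne2 : ((2 : ℂ) - 1) ≠ 0 := by norm_num
      exact (smul_eq_zero.mp h3).resolve_left hne2
    have : (2 : ℂ) • Dt e = 0 := by rw [two_smul]; exact h2
    exact (smul_eq_zero.mp this).resolve_left (by norm_num)
  -- the associativity ("cocycle with anomaly") identity, in sum form
  have hC2 : ∀ p q r : B,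
      Φ (p * q) r + Lex r (Φ p q) + Lex (r * p) (Dt q) + Lex (r * q) (Dt p)
        = Φ p (q * r) + Lex p (Φ q r) + Lex (p * r) (Dt q) + Lex (q * r) (Dt p) := by
    intro p q r
    have e1 : Dt ((p * q) * r)
        = Lex (p * q) (Dt r) + (Lex (r * p) (Dt q) + Lex (r * q) (Dt p) + Lex r (Φ p q))
          + Φ (p * q) r := by
      rw [hR' (p * q) r, hR' p q, map_add, map_add, hLmul', hLmul']
    have e2 : Dt (p * (q * r))
        = Lex (p * q) (Dt r) + (Lex (p * r) (Dt q) + Lex p (Φ q r)) + Lex (q * r) (Dt p)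
          + Φ p (q * r) := by
      rw [hR' p (q * r), hR' q r, map_add, map_add, hLmul', hLmul']
      abel
    have e4 : Lex (p * q) (Dt r) + (Lex (r * p) (Dt q) + Lex (r * q) (Dt p) + Lex r (Φ p q))
          + Φ (p * q) r
        = Lex (p * q) (Dt r) + (Lex (p * r) (Dt q) + Lex p (Φ q r)) + Lex (q * r) (Dt p)
          + Φ p (q * r) := by
      rw [← e1, ← e2, mul_assoc]
    apply eq_of_sub_eq_zero
    have e5 : (Lex (p * q) (Dt r) + (Lex (r * p) (Dt q) + Lex (r * q) (Dt p) + Lex r (Φ p q))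
          + Φ (p * q) r)
        - (Lex (p * q) (Dt r) + (Lex (p * r) (Dt q) + Lex p (Φ q r)) + Lex (q * r) (Dt p)
          + Φ p (q * r)) = 0 := sub_eq_zero.mpr e4
    rw [← e5]; abel
  -- the cyclic identity
  have hRel : ∀ p q r : B,
      Φ (p * q) r + Φ (q * r) p
        = Lex p (Φ q r) - Lex r (Φ p q) + Lex (p * r) (Dt q) - Lex (r * p) (Dt q)
          + Lex (q * r) (Dt p) - Lex (r * q) (Dt p) := by
    intro p q r
    have h := hC2 p q r
    rw [hanti p (q * r)] at h
    apply eq_of_sub_eq_zero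
    have e5 := sub_eq_zero.mpr h
    rw [← e5]; abel
  have hCycle : ∀ p q r : B, Φ (p * q) r + Φ (q * r) p + Φ (r * p) q = 0 := by
    intro p q r
    have h2S : (Φ (p * q) r + Φ (q * r) p + Φ (r * p) q)
        + (Φ (p * q) r + Φ (q * r) p + Φ (r * p) q) = 0 := by
      calc (Φ (p * q) r + Φ (q * r) p + Φ (r * p) q)
            + (Φ (p * q) r + Φ (q * r) p + Φ (r * p) q)
          = (Φ (p * q) r + Φ (q * r) p) + (Φ (q * r) p + Φ (r * p) q)
            + (Φ (r * p) q + Φ (p * q) r) := by abel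
        _ = _ := by rw [hRel p q r, hRel q r p, hRel r p q]; abel
    have : (2 : ℂ) • (Φ (p * q) r + Φ (q * r) p + Φ (r * p) q) = 0 := by
      rw [two_smul]; exact h2S
    exact (smul_eq_zero.mp this).resolve_left (by norm_num)

  -- lifted maps
  set F0 : P.T →L[ℂ] X := liftT P Φ with hF0
  set Nv : P.T →L[ℂ] X := liftT P (bilNv Lex Dt) with hNv
  set Nu : P.T →L[ℂ] X := liftT P ((bilNv Lex Dt).flip) with hNu
  set K2 : B → P.T →L[ℂ] X := fun c => liftT P (bilK2 Lex Dt c) with hK2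
  set K1 : B → P.T →L[ℂ] X := fun c => liftT P (bilK2 Lex Dt c).flip with hK1
  -- structural identities of the tensor square
  have S2 : ∀ c : B, P.flip.comp (P.rcirc c) = (P.rmul c).comp P.flip := by
    intro c
    refine ext_tmul P _ _ fun u v => ?_
    simp only [ContinuousLinearMap.comp_apply, P.rcirc_tmul, P.flip_tmul, P.rmul_tmul]
  have S3 : ∀ c : B, P.flip.comp (P.lcirc c) = (P.lmul c).comp P.flip := by
    intro c
    refine ext_tmul P _ _ fun u v => ?_
    simp only [ContinuousLinearMap.comp_apply, P.lcirc_tmul, P.flip_tmul, P.lmul_tmul]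
  have S4 : ∀ a b : B, (P.lmul a).comp (P.rmul b) = (P.rmul b).comp (P.lmul a) := by
    intro a b
    refine ext_tmul P _ _ fun u v => ?_
    simp only [ContinuousLinearMap.comp_apply, P.rmul_tmul, P.lmul_tmul]
  have S5 : ∀ a b : B, (P.rmul b).comp (P.rmul a) = P.rmul (a * b) := by
    intro a b
    refine ext_tmul P _ _ fun u v => ?_
    simp only [ContinuousLinearMap.comp_apply, P.rmul_tmul, mul_assoc]
  have S6 : ∀ b : B, P.π.comp (P.rmul b) = ((ContinuousLinearMap.mul ℂ B).flip b).comp P.π := by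
    intro b
    refine ext_tmul P _ _ fun u v => ?_
    simp only [ContinuousLinearMap.comp_apply, P.rmul_tmul, P.π_tmul,
      ContinuousLinearMap.flip_apply, ContinuousLinearMap.mul_apply', mul_assoc]
  -- lift identities
  have I1 : F0.comp P.flip = -F0 := by
    refine ext_tmul P _ _ fun u v => ?_
    simp only [ContinuousLinearMap.comp_apply, ContinuousLinearMap.neg_apply, P.flip_tmul,
      hF0, liftT_tmul]
    exact hanti v u
  have I2 : Nu = Nv.comp P.flip := by
    refine ext_tmul P _ _ fun u v => ?_
    simp only [ContinuousLinearMap.comp_apply, P.flip_tmul, hNu, hNv, liftT_tmul,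
      ContinuousLinearMap.flip_apply, bilNv_apply]
  have I3 : ∀ c : B, (K1 c).comp P.flip = K2 c := by
    intro c
    refine ext_tmul P _ _ fun u v => ?_
    simp only [ContinuousLinearMap.comp_apply, P.flip_tmul, hK1, hK2, liftT_tmul,
      ContinuousLinearMap.flip_apply, bilK2_apply]
  have I4 : ∀ c : B, Nv.comp (P.lmul c)
      = Nv.comp (P.rmul c) + (Lex.flip (Dt c)).comp (P.π.comp P.flip) + K2 c := by
    intro c
    refine ext_tmul P _ _ fun u v => ?_
    simp only [ContinuousLinearMap.comp_apply, ContinuousLinearMap.add_apply, P.lmul_tmul,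
      P.rmul_tmul, P.flip_tmul, P.π_tmul, hNv, hK2, liftT_tmul, bilNv_apply, bilK2_apply,
      ContinuousLinearMap.flip_apply]
    rw [hR' c u, map_add, map_add, hLmul', hLmul']
  have I6 : ∀ c : B, F0.comp (P.lmul c)
      = (Lex c).comp F0 - K2 c + (Φ c).comp P.π + (Lex c).comp Nv - Nv.comp (P.rmul c)
        + (Lex.flip (Dt c)).comp P.π - (Lex.flip (Dt c)).comp (P.π.comp P.flip) := by
    intro c
    refine ext_tmul P _ _ fun u v => ?_
    simp only [ContinuousLinearMap.comp_apply, ContinuousLinearMap.add_apply,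
      ContinuousLinearMap.sub_apply, P.lmul_tmul, P.rmul_tmul, P.flip_tmul, P.π_tmul,
      hF0, hNv, hK2, liftT_tmul, bilNv_apply, bilK2_apply, ContinuousLinearMap.flip_apply]
    have h := hC2 c u v
    apply eq_of_sub_eq_zero
    have e5 := sub_eq_zero.mpr h
    rw [← e5, hLmul' c v]
    abel
  have I7 : ∀ c : B, F0.comp (P.rcirc c)
      = K1 c + K2 c + F0.comp (P.lcirc c) + (Lex.flip (Dt c)).comp P.π
        - (Lex.flip (Dt c)).comp (P.π.comp P.flip) + (Lex c).comp Nv - Nv.comp (P.rmul c) := by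
    intro c
    refine ext_tmul P _ _ fun u v => ?_
    simp only [ContinuousLinearMap.comp_apply, ContinuousLinearMap.add_apply,
      ContinuousLinearMap.sub_apply, P.rcirc_tmul, P.lcirc_tmul, P.rmul_tmul, P.flip_tmul,
      P.π_tmul, hF0, hNv, hK1, hK2, liftT_tmul, bilNv_apply, bilK2_apply,
      ContinuousLinearMap.flip_apply]
    have h := hC2 u c v
    rw [hanti u c, map_neg] at h
    apply eq_of_sub_eq_zero
    have e5 := sub_eq_zero.mpr h
    rw [← e5, hLmul' c v]
    abel
  have I8 : Dt.comp P.π = Nu + Nv + F0 := by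
    refine ext_tmul P _ _ fun u v => ?_
    simp only [ContinuousLinearMap.comp_apply, ContinuousLinearMap.add_apply, P.π_tmul,
      hF0, hNv, hNu, liftT_tmul, bilNv_apply, ContinuousLinearMap.flip_apply]
    exact hR' u v
  -- limits
  have hπe : Tendsto (fun i => P.π (t i)) l (𝓝 e) := by
    have := hq e
    simpa only [hmul_e] using this
  have hF0m : ∀ i, F0 (t i) = 0 := by
    intro i
    have h := ContinuousLinearMap.ext_iff.mp I1 (t i)
    simp only [ContinuousLinearMap.comp_apply, ContinuousLinearMap.neg_apply, hfl i] at h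
    have h2 : (2 : ℂ) • F0 (t i) = 0 := by
      rw [two_smul]
      nth_rewrite 1 [h]
      exact neg_add_cancel _
    exact (smul_eq_zero.mp h2).resolve_left (by norm_num)
  have hNum : ∀ i, Nu (t i) = Nv (t i) := by
    intro i
    have h := ContinuousLinearMap.ext_iff.mp I2 (t i)
    simpa only [ContinuousLinearMap.comp_apply, hfl i] using h
  have hK12 : ∀ c i, K1 c (t i) = K2 c (t i) := by
    intro c i
    have h := ContinuousLinearMap.ext_iff.mp (I3 c) (t i)
    simpa only [ContinuousLinearMap.comp_apply, hfl i] using h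
  have hF0rc : ∀ (c : B) i, F0 (P.rcirc c (t i)) = -F0 (P.rmul c (t i)) := by
    intro c i
    have h := ContinuousLinearMap.ext_iff.mp I1 (P.rcirc c (t i))
    simp only [ContinuousLinearMap.comp_apply, ContinuousLinearMap.neg_apply] at h
    have h2 := ContinuousLinearMap.ext_iff.mp (S2 c) (t i)
    simp only [ContinuousLinearMap.comp_apply, hfl i] at h2
    rw [h2] at h
    rw [h, neg_neg]

  have hF0lc : ∀ (c : B) i, F0 (P.lcirc c (t i)) = -F0 (P.lmul c (t i)) := by
    intro c i
    have h := ContinuousLinearMap.ext_iff.mp I1 (P.lcirc c (t i))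
    simp only [ContinuousLinearMap.comp_apply, ContinuousLinearMap.neg_apply] at h
    have h2 := ContinuousLinearMap.ext_iff.mp (S3 c) (t i)
    simp only [ContinuousLinearMap.comp_apply, hfl i] at h2
    rw [h2] at h
    rw [h, neg_neg]
  have hNvt : Tendsto (fun i => Nv (t i)) l (𝓝 0) := by
    have hDπ : Tendsto (fun i => Dt (P.π (t i))) l (𝓝 0) := by
      have h := (Dt.continuous.tendsto e).comp hπe
      rw [hDte] at h
      exact h
    have heq : ∀ i, Nv (t i) = (2⁻¹ : ℂ) • Dt (P.π (t i)) := by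
      intro i
      have h := ContinuousLinearMap.ext_iff.mp I8 (t i)
      simp only [ContinuousLinearMap.comp_apply, ContinuousLinearMap.add_apply, hNum i,
        hF0m i, add_zero] at h
      rw [h, ← two_smul ℂ, smul_smul]
      norm_num
    have h2 := hDπ.const_smul (2⁻¹ : ℂ)
    rw [smul_zero] at h2
    exact h2.congr fun i => (heq i).symm
  have hK2t : ∀ c : B, Tendsto (fun i => K2 c (t i)) l (𝓝 (-(Dt c))) := by
    intro c
    have heq : ∀ i, K2 c (t i)
        = Nv (P.lmul c (t i) - P.rmul c (t i)) - Lex (P.π (t i)) (Dt c) := by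
      intro i
      have h := ContinuousLinearMap.ext_iff.mp (I4 c) (t i)
      simp only [ContinuousLinearMap.comp_apply, ContinuousLinearMap.add_apply, hfl i,
        ContinuousLinearMap.flip_apply] at h
      rw [map_sub, h]
      abel
    have h1 : Tendsto (fun i => Nv (P.lmul c (t i) - P.rmul c (t i))) l (𝓝 0) := by
      have h := (Nv.continuous.tendsto 0).comp (hmove c)
      rw [map_zero] at h
      exact h.congr fun i => rfl
    have h2 : Tendsto (fun i => Lex (P.π (t i)) (Dt c)) l (𝓝 (Dt c)) := by
      have h := ((Lex.flip (Dt c)).continuous.tendsto e).comp hπe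
      simp only [Function.comp_def, ContinuousLinearMap.flip_apply, hLone] at h
      exact h
    have h3 := h1.sub h2
    rw [zero_sub] at h3
    exact h3.congr fun i => (heq i).symm
  have hK1t : ∀ c : B, Tendsto (fun i => K1 c (t i)) l (𝓝 (-(Dt c))) :=
    fun c => (hK2t c).congr fun i => (hK12 c i).symm
  have hF0Δ : ∀ c : B,
      Tendsto (fun i => F0 (P.lmul c (t i)) - F0 (P.rmul c (t i))) l (𝓝 0) := by
    intro c
    have h := (F0.continuous.tendsto 0).comp (hmove c)
    simp only [Function.comp_def, map_sub, map_zero] at h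
    exact h
  have hLexNv : ∀ c : B, Tendsto (fun i => Lex c (Nv (t i))) l (𝓝 0) := by
    intro c
    have h := ((Lex c).continuous.tendsto 0).comp hNvt
    simp only [Function.comp_def, map_zero] at h
    exact h
  have hnt : ∀ c : B,
      Tendsto (fun i => Nv (P.rmul c (t i))) l (𝓝 (-(Dt c) + -(Dt c))) := by
    intro c
    have heq : ∀ i, Nv (P.rmul c (t i))
        = K1 c (t i) + K2 c (t i) + (F0 (P.rmul c (t i)) - F0 (P.lmul c (t i)))
          + Lex c (Nv (t i)) := by
      intro i
      have h := ContinuousLinearMap.ext_iff.mp (I7 c) (t i)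
      simp only [ContinuousLinearMap.comp_apply, ContinuousLinearMap.add_apply,
        ContinuousLinearMap.sub_apply, hfl i, ContinuousLinearMap.flip_apply] at h
      rw [hF0rc c i, hF0lc c i] at h
      apply eq_of_sub_eq_zero
      have e5 := sub_eq_zero.mpr h
      rw [← e5]
      abel
    have h3 : Tendsto (fun i => F0 (P.rmul c (t i)) - F0 (P.lmul c (t i))) l (𝓝 0) := by
      have h := (hF0Δ c).neg
      rw [neg_zero] at h
      exact h.congr fun i => by abel
    have hcomb := (((hK1t c).add (hK2t c)).add h3).add (hLexNv c)
    rw [add_zero, add_zero] at hcomb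
    exact hcomb.congr fun i => (heq i).symm
  have hΦπ : ∀ c : B, Tendsto (fun i => Φ c (P.π (t i))) l (𝓝 0) := by
    intro c
    have h := ((Φ c).continuous.tendsto e).comp hπe
    rw [hphi_e c] at h
    exact h
  have hYt : ∀ c : B,
      Tendsto (fun i => F0 (P.lmul c (t i))) l (𝓝 (Dt c + (Dt c + Dt c))) := by
    intro c
    have heq : ∀ i, F0 (P.lmul c (t i))
        = -K2 c (t i) + Φ c (P.π (t i)) + Lex c (Nv (t i)) - Nv (P.rmul c (t i)) := by
      intro i
      have h := ContinuousLinearMap.ext_iff.mp (I6 c) (t i)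
      simp only [ContinuousLinearMap.comp_apply, ContinuousLinearMap.add_apply,
        ContinuousLinearMap.sub_apply, hfl i, ContinuousLinearMap.flip_apply] at h
      rw [hF0m i, map_zero] at h
      rw [h]
      abel
    have hcomb := (((hK2t c).neg.add (hΦπ c)).add (hLexNv c)).sub (hnt c)
    have : -(-(Dt c)) + 0 + 0 - (-(Dt c) + -(Dt c)) = Dt c + (Dt c + Dt c) := by abel
    rw [this] at hcomb
    exact hcomb.congr fun i => (heq i).symm
  have hXt : ∀ c : B,
      Tendsto (fun i => F0 (P.rmul c (t i))) l (𝓝 (Dt c + (Dt c + Dt c))) := by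
    intro c
    have hcomb := (hYt c).sub (hF0Δ c)
    rw [sub_zero] at hcomb
    exact hcomb.congr fun i => by abel
  -- the final cyclic-sum argument
  intro p q
  set G : P.T →L[ℂ] X := liftT P (bilG Dt (q * p)) with hG
  have I9 : F0.comp ((P.lmul p).comp (P.rmul q)) - (Φ p).comp (P.π.comp (P.rmul q)) + G
      = 0 := by
    refine ext_tmul P _ _ fun u v => ?_
    simp only [ContinuousLinearMap.comp_apply, ContinuousLinearMap.add_apply,
      ContinuousLinearMap.sub_apply, ContinuousLinearMap.zero_apply, P.lmul_tmul,
      P.rmul_tmul, P.π_tmul, hF0, hG, liftT_tmul, bilG_apply]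
    have h := hCycle p u (v * q)
    rw [mul_assoc v q p, hanti (u * (v * q)) p] at h
    rw [← h]
    abel
  have I10 : G = F0.comp ((P.rcirc (q * p)).comp P.flip) := by
    refine ext_tmul P _ _ fun u v => ?_
    simp only [ContinuousLinearMap.comp_apply, P.flip_tmul, P.rcirc_tmul, hF0, hG,
      liftT_tmul, bilG_apply]
    rfl
  have hT1 : Tendsto (fun i => F0 (P.lmul p (P.rmul q (t i)))) l
      (𝓝 (Dt (p * q) + (Dt (p * q) + Dt (p * q)))) := by
    have heq : ∀ i, F0 (P.lmul p (P.rmul q (t i)))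
        = F0 (P.rmul q (P.lmul p (t i) - P.rmul p (t i))) + F0 (P.rmul (p * q) (t i)) := by
      intro i
      have h4 := ContinuousLinearMap.ext_iff.mp (S4 p q) (t i)
      have h5 := ContinuousLinearMap.ext_iff.mp (S5 p q) (t i)
      simp only [ContinuousLinearMap.comp_apply] at h4 h5
      rw [h4, map_sub, map_sub, sub_add, h5]
      abel
    have h1 : Tendsto (fun i => F0 (P.rmul q (P.lmul p (t i) - P.rmul p (t i)))) l (𝓝 0) := by
      have h := ((F0.comp (P.rmul q)).continuous.tendsto 0).comp (hmove p)
      simp only [Function.comp_def, ContinuousLinearMap.comp_apply, map_zero] at h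
      exact h
    have hcomb := h1.add (hXt (p * q))
    rw [zero_add] at hcomb
    exact hcomb.congr fun i => (heq i).symm
  have hT2 : Tendsto (fun i => Φ p (P.π (P.rmul q (t i)))) l (𝓝 (Φ p q)) := by
    have heq : ∀ i, P.π (P.rmul q (t i)) = P.π (t i) * q := by
      intro i
      have h6 := ContinuousLinearMap.ext_iff.mp (S6 q) (t i)
      simpa only [ContinuousLinearMap.comp_apply, ContinuousLinearMap.flip_apply,
        ContinuousLinearMap.mul_apply'] using h6
    have h := ((Φ p).continuous.tendsto q).comp (hq q)
    exact (h.congr fun i => rfl).congr fun i => by rw [Function.comp_apply, ← heq i]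
  have hT3 : Tendsto (fun i => G (t i)) l
      (𝓝 (-(Dt (q * p) + (Dt (q * p) + Dt (q * p))))) := by
    have heq : ∀ i, G (t i) = -F0 (P.rmul (q * p) (t i)) := by
      intro i
      have h := ContinuousLinearMap.ext_iff.mp I10 (t i)
      simp only [ContinuousLinearMap.comp_apply, hfl i] at h
      rw [h, hF0rc (q * p) i]
    have hcomb := (hXt (q * p)).neg
    exact hcomb.congr fun i => (heq i).symm
  have hzero : Tendsto
      (fun i => F0 (P.lmul p (P.rmul q (t i))) - Φ p (P.π (P.rmul q (t i))) + G (t i)) l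
      (𝓝 ((Dt (p * q) + (Dt (p * q) + Dt (p * q))) - Φ p q
        + -(Dt (q * p) + (Dt (q * p) + Dt (q * p))))) :=
    (hT1.sub hT2).add hT3
  have hzero' : Tendsto
      (fun i => F0 (P.lmul p (P.rmul q (t i))) - Φ p (P.π (P.rmul q (t i))) + G (t i)) l
      (𝓝 0) := by
    have heq : ∀ i,
        F0 (P.lmul p (P.rmul q (t i))) - Φ p (P.π (P.rmul q (t i))) + G (t i) = 0 := by
      intro i
      have h := ContinuousLinearMap.ext_iff.mp I9 (t i)
      simpa only [ContinuousLinearMap.comp_apply, ContinuousLinearMap.add_apply,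
        ContinuousLinearMap.sub_apply, ContinuousLinearMap.zero_apply] using h
    exact tendsto_const_nhds.congr fun i => (heq i).symm
  have hkey := tendsto_nhds_unique hzero' hzero
  rw [hΦdef, phiB_apply] at hkey
  have h5 : ((5 : ℂ) / 2) • (Dt (p * q) - Dt (q * p)) = 0 := by
    rw [hkey]
    module
  have h6 : Dt (p * q) - Dt (q * p) = 0 :=
    (smul_eq_zero.mp h5).resolve_left (by norm_num)
  exact sub_eq_zero.mp h6

end Core

/-- Let `𝔘` be a Banach algebra such that its `ℓ¹`-unitization `𝔘♯` is
symmetrically pseudo-amenable, and `X` a Banach `𝔘`-bimodule.  Then every bounded central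
Jordan derivation from `𝔘` to `X` (i.e. with range in `Z_𝔘(X)`) is a derivation. -/
theorem central_jordanDerivation_isDerivation {A X : Type u} [NonUnitalNormedRing A] [NormedSpace ℂ A]
    [IsScalarTower ℂ A A] [SMulCommClass ℂ A A] [CompleteSpace A]
    [NormedAddCommGroup X] [NormedSpace ℂ X] [CompleteSpace X]
    (P : ProjTensorSquare (WithLp 1 (Unitization ℂ A))) (hP : P.SymmPseudoAmenable)
    (M : BanachBimodule A X) (D : A →L[ℂ] X)
    (hD : M.IsJordanDerivation D) (hcentral : ∀ a, D a ∈ M.center) :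
    M.IsDerivation D := by
  classical
  obtain ⟨ι, l, t, hne, hfl, hmove, hq⟩ := hP
  -- the coordinate maps of the `ℓ¹`-unitization
  set sndL : WithLp 1 (Unitization ℂ A) →L[ℂ] A :=
    LinearMap.mkContinuous
      ((Unitization.sndHom ℂ ℂ A).comp (WithLp.linearEquiv 1 ℂ (Unitization ℂ A)).toLinearMap) 1
      (fun p => by
        rw [one_mul, WithLp.unitization_norm_def]
        exact le_add_of_nonneg_left (norm_nonneg _)) with hsndL
  set fstL : WithLp 1 (Unitization ℂ A) →L[ℂ] ℂ :=
    LinearMap.mkContinuous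
      ((Unitization.fstHom ℂ A).toLinearMap.comp
        (WithLp.linearEquiv 1 ℂ (Unitization ℂ A)).toLinearMap) 1
      (fun p => by
        rw [one_mul, WithLp.unitization_norm_def]
        exact le_add_of_nonneg_right (norm_nonneg _)) with hfstL
  have hsnd : ∀ p : WithLp 1 (Unitization ℂ A),
      sndL p = (WithLp.equiv 1 (Unitization ℂ A) p).snd := fun p => rfl
  have hfst : ∀ p : WithLp 1 (Unitization ℂ A),
      fstL p = (WithLp.equiv 1 (Unitization ℂ A) p).fst := fun p => rfl
  set Dt : WithLp 1 (Unitization ℂ A) →L[ℂ] X := D.comp sndL with hDt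
  set Lex : WithLp 1 (Unitization ℂ A) →L[ℂ] X →L[ℂ] X :=
    ((ContinuousLinearMap.lsmul ℂ ℂ).comp fstL) + (M.lsmul.comp sndL) with hLex
  have hDt_ap : ∀ p, Dt p = D (sndL p) := fun p => rfl
  have hLex_ap : ∀ p x, Lex p x = fstL p • x + M.lsmul (sndL p) x := fun p x => rfl
  have hc : ∀ a c : A, M.lsmul c (D a) = M.rsmul c (D a) := fun a c => hcentral a c
  -- component formulas for the ring structure
  have hfst_mul : ∀ p q : WithLp 1 (Unitization ℂ A), fstL (p * q) = fstL p * fstL q := by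
    intro p q
    simp only [hfst, WithLp.unitization_mul, Unitization.fst_mul]
    rfl
  have hsnd_mul : ∀ p q : WithLp 1 (Unitization ℂ A),
      sndL (p * q) = fstL p • sndL q + fstL q • sndL p + sndL p * sndL q := by
    intro p q
    simp only [hsnd, hfst, WithLp.unitization_mul, Unitization.snd_mul]
    rfl
  have hfst_one : fstL 1 = 1 := rfl
  have hsnd_one : sndL 1 = 0 := rfl
  -- hypotheses of the abstract commutation theorem
  have hLone : ∀ x : X, Lex 1 x = x := by
    intro x
    rw [hLex_ap, hfst_one, hsnd_one, map_zero, one_smul]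
    simp
  have hLmul : ∀ (p q : WithLp 1 (Unitization ℂ A)) (x : X),
      Lex (p * q) x = Lex p (Lex q x) := by
    intro p q x
    rw [hLex_ap, hLex_ap, hLex_ap, hsnd_mul, hfst_mul]
    rw [map_add, map_add, map_smul, map_smul]
    simp only [ContinuousLinearMap.add_apply, ContinuousLinearMap.smul_apply,
      M.lsmul_mul, map_add, map_smul]
    module
  have hR : ∀ p q : WithLp 1 (Unitization ℂ A),
      Dt (p * q) + Dt (q * p) = (2 : ℂ) • (Lex p (Dt q) + Lex q (Dt p)) := by
    intro p q
    rw [hDt_ap, hDt_ap, hsnd_mul p q, hsnd_mul q p]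
    rw [map_add, map_add, map_smul, map_smul, map_add, map_add, map_smul, map_smul]
    have hj : D (sndL p * sndL q) + D (sndL q * sndL p)
        = M.rsmul (sndL q) (D (sndL p)) + M.lsmul (sndL p) (D (sndL q))
          + M.rsmul (sndL p) (D (sndL q)) + M.lsmul (sndL q) (D (sndL p)) := by
      rw [← map_add]
      exact hD (sndL p) (sndL q)
    rw [← hc (sndL p) (sndL q), ← hc (sndL q) (sndL p)] at hj
    rw [hLex_ap, hLex_ap]
    rw [hDt_ap, hDt_ap]
    have hj2 : D (sndL q * sndL p)
        = M.lsmul (sndL q) (D (sndL p)) + M.lsmul (sndL p) (D (sndL q))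
          + M.lsmul (sndL p) (D (sndL q)) + M.lsmul (sndL q) (D (sndL p))
          - D (sndL p * sndL q) := by
      rw [← hj]; abel
    rw [hj2]
    module
  have hcomm := core_comm P Lex Dt 1 one_mul mul_one hLone hLmul hR hne hfl hmove hq
  -- transfer back to `A`
  have hDcomm : ∀ a b : A, D (a * b) = D (b * a) := by
    intro a b
    have h := hcomm ((WithLp.equiv 1 (Unitization ℂ A)).symm (a : Unitization ℂ A))
      ((WithLp.equiv 1 (Unitization ℂ A)).symm (b : Unitization ℂ A))
    rw [hDt_ap, hDt_ap, hsnd, hsnd] at h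
    simpa only [WithLp.unitization_mul, Equiv.apply_symm_apply, WithLp.equiv_apply,
      WithLp.equiv_symm_apply, WithLp.ofLp_toLp, Unitization.snd_mul,
      Unitization.fst_inr, Unitization.snd_inr, zero_smul, add_zero, zero_add] using h
  -- conclude the derivation identity
  intro a b
  have h := hD a b
  rw [map_add, ← hDcomm a b] at h
  rw [← hc b a, hc a b] at h
  have h2 : (2 : ℂ) • D (a * b) = (2 : ℂ) • (M.rsmul b (D a) + M.lsmul a (D b)) := by
    rw [two_smul, two_smul, h]
    abel
  exact smul_right_injective X (by norm_num : (2 : ℂ) ≠ 0) h2
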